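/- Frequentist learning is natural with respect to multiset-extended channels: for a channel c : X → D(Y) and K ≥ 1, flrn ∘ M[K](c) = c ∘ flrn as channels M[K](X) → D(Y), i.e. for every multiset φ of size K, Σ_{ψ} M[K](c)(φ)(ψ)·ψ(y)/K = Σ_x (φ(x)/K)·c(x)(y). -/

import Mathlib

open Finset

noncomputable def validity {X : Type*} [Fintype X] (ω p : X → ℝ) : ℝ := ∑ x, ω x * p x
noncomputable def updateD {X : Type*} [Fintype X] (ω p : X → ℝ) : X → ℝ :=
  fun x => ω x * p x / validity ω p
noncomputable def push {X Y : Type*} [Fintype X] (c : X → Y → ℝ) (ω : X → ℝ) : Y → ℝ :=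
  fun y => ∑ x, ω x * c x y
noncomputable def pull {X Y : Type*} [Fintype Y] (c : X → Y → ℝ) (q : Y → ℝ) : X → ℝ :=
  fun x => ∑ y, c x y * q y
noncomputable def dagger {X Y : Type*} [Fintype X] (c : X → Y → ℝ) (ω : X → ℝ) : Y → X → ℝ :=
  fun y x => ω x * c x y / push c ω y

def IsDist {X : Type*} [Fintype X] (ω : X → ℝ) : Prop :=
  (∀ x, 0 ≤ ω x) ∧ ∑ x, ω x = 1
def IsChannel {X Y : Type*} [Fintype Y] (c : X → Y → ℝ) : Prop :=
  ∀ x, IsDist (c x)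
def IsPred {X : Type*} (p : X → ℝ) : Prop := ∀ x, 0 ≤ p x ∧ p x ≤ 1

noncomputable def coefm {X : Type*} [Fintype X] [DecidableEq X] (K : ℕ) (φ : Sym X K) : ℝ :=
  (K.factorial : ℝ) / ∏ x, (((φ : Multiset X).count x).factorial : ℝ)
noncomputable def multinom {X : Type*} [Fintype X] [DecidableEq X] (K : ℕ) (ω : X → ℝ)
    (φ : Sym X K) : ℝ :=
  coefm K φ * ∏ x, ω x ^ ((φ : Multiset X).count x)
noncomputable def flrn {X : Type*} [DecidableEq X] (K : ℕ) (φ : Sym X K) : X → ℝ :=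
  fun x => ((φ : Multiset X).count x : ℝ) / K
def acc {X : Type*} {K : ℕ} (v : Fin K → X) : Sym X K :=
  ⟨Multiset.map v Finset.univ.val, by simp⟩
noncomputable def arr {X : Type*} [Fintype X] [DecidableEq X] {K : ℕ} (φ : Sym X K) :
    (Fin K → X) → ℝ :=
  fun v => if acc v = φ then 1 / coefm K φ else 0
noncomputable def Mchan {X Y : Type*} [Fintype X] [DecidableEq X] [Fintype Y] [DecidableEq Y]
    {K : ℕ} (c : X → Y → ℝ) : Sym X K → Sym Y K → ℝ :=
  fun φ ψ => ∑ v : Fin K → X, arr φ v *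
    ∑ w : Fin K → Y, (∏ i, c (v i) (w i)) * (if acc w = ψ then 1 else 0)
open Classical in
noncomputable def klE {Z : Type*} [Fintype Z] (ω ρ : Z → ℝ) : EReal :=
  if ∀ z, ω z ≠ 0 → ρ z ≠ 0 then ((∑ z, ω z * Real.log (ω z / ρ z) : ℝ) : EReal) else ⊤


-- Auxiliary lemmas --------------------------------------------------------

private theorem map_univ_succ' {K : ℕ} {X : Type*} [Fintype X] (v : Fin (K+1) → X) :
    Multiset.map v univ.val = v 0 ::ₘ Multiset.map (v ∘ Fin.succ) univ.val := by
  have h : (univ : Finset (Fin (K+1))).val = ↑(List.finRange (K+1)) := rfl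
  have h2 : (univ : Finset (Fin K)).val = ↑(List.finRange K) := rfl
  rw [h, h2, List.finRange_succ]
  simp [Multiset.map_map, Function.comp_def]

noncomputable def Nn (X : Type*) [Fintype X] [DecidableEq X] (K : ℕ) (φ : Multiset X) : ℝ :=
  ∑ v : Fin K → X, if Multiset.map v univ.val = φ then 1 else 0

private theorem sum_count' {X : Type*} [Fintype X] [DecidableEq X] (φ : Multiset X) :
    ∑ x : X, ((φ.count x : ℝ)) = (Multiset.card φ : ℝ) := by
  rw [← Nat.cast_sum]
  congr 1
  rw [← Multiset.toFinset_sum_count_eq φ]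
  exact (Finset.sum_subset (subset_univ _) (fun x _ hx =>
    Multiset.count_eq_zero_of_notMem (fun h => hx (Multiset.mem_toFinset.2 h)))).symm

private theorem cnt' {X : Type*} [Fintype X] [DecidableEq X] :
    ∀ (K : ℕ) (φ : Multiset X), Multiset.card φ = K →
      Nn X K φ * ∏ x, (((φ.count x).factorial : ℝ)) = (K.factorial : ℝ) := by
  intro K
  induction K with
  | zero =>
    intro φ hφ
    rw [Multiset.card_eq_zero] at hφ
    subst hφ
    simp [Nn]
  | succ K ih =>
    intro φ hφ
    have step : Nn X (K+1) φ = ∑ x : X, (if x ∈ φ then Nn X K (φ.erase x) else 0) := by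
      rw [Nn, ← (Fin.consEquiv (fun _ : Fin (K+1) => X)).sum_comp, Fintype.sum_prod_type]
      refine Finset.sum_congr rfl fun x _ => ?_
      have hmap : ∀ w : Fin K → X, Multiset.map ((Fin.consEquiv (fun _ : Fin (K+1) => X)) (x, w)) univ.val
          = x ::ₘ Multiset.map w univ.val := by
        intro w
        rw [map_univ_succ']
        simp [Fin.consEquiv, Function.comp_def]
      rw [Nn]
      split_ifs with hx
      · refine Finset.sum_congr rfl fun w _ => ?_
        rw [hmap w]
        congr 1
        simp only [eq_iff_iff]
        constructor
        · intro h
          have := congrArg (Multiset.erase · x) h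
          simpa using this
        · intro h
          rw [h]
          exact Multiset.cons_erase hx
      · refine Finset.sum_eq_zero fun w _ => ?_
        rw [hmap w, if_neg]
        intro h
        exact hx (h ▸ Multiset.mem_cons_self x _)
    rw [step, Finset.sum_mul]
    have key : ∀ x : X, (if x ∈ φ then Nn X K (φ.erase x) else 0)
          * ∏ y, (((φ.count y).factorial : ℝ))
        = (φ.count x : ℝ) * (K.factorial : ℝ) := by
      intro x
      split_ifs with hx
      · have hc : φ.count x = (φ.erase x).count x + 1 := by
          rw [Multiset.count_erase_self,
            Nat.sub_add_cancel (Multiset.one_le_count_iff_mem.2 hx)]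
        have hprod : ∏ y, (((φ.count y).factorial : ℝ))
            = (φ.count x : ℝ) * ∏ y, ((((φ.erase x).count y).factorial : ℝ)) := by
          rw [← Finset.mul_prod_erase univ _ (mem_univ x),
              ← Finset.mul_prod_erase univ
                (fun y => (((φ.erase x).count y).factorial : ℝ)) (mem_univ x),
              ← mul_assoc]
          congr 1
          · rw [hc, Nat.factorial_succ]
            push_cast
            ring
          · refine Finset.prod_congr rfl fun y hy => ?_
            rw [Multiset.count_erase_of_ne (mem_erase.1 hy).1]
        rw [hprod, ← mul_assoc, mul_comm (Nn X K (φ.erase x)), mul_assoc,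
          ih (φ.erase x) (by rw [Multiset.card_erase_of_mem hx, hφ]; rfl)]
      · rw [zero_mul, Multiset.count_eq_zero_of_notMem hx]
        simp
    rw [Finset.sum_congr rfl fun x _ => key x, ← Finset.sum_mul, sum_count', hφ,
      Nat.factorial_succ]
    push_cast
    ring

private theorem cnt_map_sum' {K : ℕ} {Y : Type*} [Fintype Y] [DecidableEq Y]
    (w : Fin K → Y) (y : Y) :
    (((Multiset.map w univ.val).count y : ℕ) : ℝ) = ∑ i : Fin K, if w i = y then (1:ℝ) else 0 := by
  rw [Multiset.count_map]
  have h : Multiset.card (Multiset.filter (fun a => y = w a) univ.val)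
      = (univ.filter (fun a => y = w a)).card := rfl
  rw [h, Finset.card_filter]
  push_cast
  exact Finset.sum_congr rfl fun i _ => by simp [eq_comm]

private theorem lemB' {K : ℕ} {Y : Type*} [Fintype Y] [DecidableEq Y] (g : Fin K → Y → ℝ)
    (hg : ∀ i, ∑ z, g i z = 1) (y : Y) :
    ∑ w : Fin K → Y, (∏ i, g i (w i)) * (((Multiset.map w univ.val).count y : ℕ) : ℝ)
      = ∑ i, g i y := by
  have h1 : ∀ w : Fin K → Y, (∏ i, g i (w i)) * (((Multiset.map w univ.val).count y : ℕ) : ℝ)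
      = ∑ i, (∏ j, g j (w j)) * (if w i = y then (1:ℝ) else 0) := by
    intro w
    rw [cnt_map_sum', Finset.mul_sum]
  rw [Finset.sum_congr rfl fun w _ => h1 w, Finset.sum_comm]
  refine Finset.sum_congr rfl fun i _ => ?_
  have h2 : ∀ w : Fin K → Y, (∏ j, g j (w j)) * (if w i = y then (1:ℝ) else 0)
      = ∏ j, (if j = i then (if w j = y then g j (w j) else 0) else g j (w j)) := by
    intro w
    rw [← Finset.mul_prod_erase univ (fun j => g j (w j)) (mem_univ i),
        ← Finset.mul_prod_erase univ
          (fun j => if j = i then (if w j = y then g j (w j) else 0) else g j (w j)) (mem_univ i)]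
    have he : ∏ j ∈ univ.erase i,
        (if j = i then (if w j = y then g j (w j) else 0) else g j (w j))
        = ∏ j ∈ univ.erase i, g j (w j) :=
      Finset.prod_congr rfl fun j hj => if_neg (mem_erase.1 hj).1
    rw [he, if_pos rfl]
    by_cases h : w i = y <;> simp [h]
  rw [Finset.sum_congr rfl fun w _ => h2 w, ← Fintype.piFinset_univ,
    Finset.sum_prod_piFinset univ (fun j z => if j = i then (if z = y then g j z else 0) else g j z)]
  rw [Finset.prod_eq_single i
      (fun j _ hj => by rw [Finset.sum_congr rfl fun z _ => if_neg hj]; exact hg j)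
      (fun h => absurd (mem_univ i) h)]
  rw [Finset.sum_congr rfl fun z _ => if_pos rfl]
  exact Finset.sum_ite_eq' univ y (g i) ▸ by simp

private theorem sum_arr' {X : Type*} [Fintype X] [DecidableEq X] {K : ℕ} (φ : Sym X K)
    (hN : Nn X K ↑φ = coefm K φ) (hc0 : coefm K φ ≠ 0) :
    ∑ v : Fin K → X, arr φ v = 1 := by
  have h : ∑ v : Fin K → X, arr φ v = Nn X K ↑φ * (1 / coefm K φ) := by
    rw [Nn, Finset.sum_mul]
    refine Finset.sum_congr rfl fun v _ => ?_
    rw [arr]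
    by_cases h : acc v = φ
    · rw [if_pos h, if_pos (by rw [← h]; rfl), one_mul]
    · rw [if_neg h, if_neg, zero_mul]
      exact fun hm => h (Sym.coe_injective hm)
  rw [h, hN]
  field_simp

-- Main theorem -------------------------------------------------------------

theorem stmt16 {X Y : Type*} [Fintype X] [DecidableEq X] [Fintype Y] [DecidableEq Y]
    (K : ℕ) (hK : 1 ≤ K) (c : X → Y → ℝ) (hc : IsChannel c) :
    ∀ (φ : Sym X K) (y : Y),
      ∑ ψ : Sym Y K, Mchan c φ ψ * (((ψ : Multiset Y).count y : ℝ) / K)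
        = ∑ x, (((φ : Multiset X).count x : ℝ) / K) * c x y := by
  intro φ y
  have hprodpos : (0:ℝ) < ∏ x, ((((φ : Multiset X).count x).factorial : ℝ)) :=
    Finset.prod_pos fun x _ => by exact_mod_cast Nat.factorial_pos _
  have hcnt := cnt' K (φ : Multiset X) φ.prop
  have hN : Nn X K (φ : Multiset X) = coefm K φ := by
    rw [coefm, eq_div_iff (ne_of_gt hprodpos)]
    exact hcnt
  have hc0 : coefm K φ ≠ 0 := by
    rw [coefm]
    positivity
  -- Step 1: exchange sums, eliminating ψ
  have step1 : ∑ ψ : Sym Y K, Mchan c φ ψ * (((ψ : Multiset Y).count y : ℝ) / K)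
      = ∑ v : Fin K → X, arr φ v *
          ∑ w : Fin K → Y, (∏ i, c (v i) (w i)) *
            ((((acc w : Sym Y K) : Multiset Y).count y : ℝ) / K) := by
    simp only [Mchan, Finset.sum_mul, mul_assoc, ite_mul, one_mul, zero_mul]
    rw [Finset.sum_comm]
    refine Finset.sum_congr rfl fun v _ => ?_
    rw [← Finset.mul_sum]
    congr 1
    rw [Finset.sum_comm]
    refine Finset.sum_congr rfl fun w _ => ?_
    rw [← Finset.mul_sum]
    congr 1
    rw [Finset.sum_ite_eq univ (acc w) (fun ψ : Sym Y K => ((ψ : Multiset Y).count y : ℝ) / K),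
      if_pos (mem_univ _)]
  -- Step 2: the inner sum over w
  have step2 : ∀ v : Fin K → X,
      ∑ w : Fin K → Y, (∏ i, c (v i) (w i)) *
          ((((acc w : Sym Y K) : Multiset Y).count y : ℝ) / K)
        = (∑ i, c (v i) y) / K := by
    intro v
    have : ∀ w : Fin K → Y,
        (∏ i, c (v i) (w i)) * ((((acc w : Sym Y K) : Multiset Y).count y : ℝ) / K)
        = ((∏ i, c (v i) (w i)) * (((Multiset.map w univ.val).count y : ℕ) : ℝ)) * (1 / K) := by
      intro w
      have hcoe : ((acc w : Sym Y K) : Multiset Y) = Multiset.map w univ.val := rfl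
      rw [hcoe]
      ring
    rw [Finset.sum_congr rfl fun w _ => this w, ← Finset.sum_mul,
      lemB' (fun i => c (v i)) (fun i => (hc (v i)).2) y]
    ring
  rw [step1, Finset.sum_congr rfl fun v _ => by rw [step2 v]]
  -- Step 3: replace the inner sum by its value on the fiber
  have step3 : ∀ v : Fin K → X, arr φ v * ((∑ i, c (v i) y) / K)
      = arr φ v * ((∑ x, ((φ : Multiset X).count x : ℝ) * c x y) / K) := by
    intro v
    rw [arr]
    split_ifs with h
    · congr 2
      have hφv : (φ : Multiset X) = Multiset.map v univ.val := by rw [← h]; rfl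
      rw [hφv]
      have : ∀ x : X, (((Multiset.map v univ.val).count x : ℕ) : ℝ) * c x y
          = ∑ i, (if v i = x then (1:ℝ) else 0) * c x y := by
        intro x
        rw [cnt_map_sum', Finset.sum_mul]
      rw [Finset.sum_congr rfl fun x _ => this x, Finset.sum_comm]
      refine Finset.sum_congr rfl fun i _ => ?_
      simp only [ite_mul, one_mul, zero_mul]
      rw [Finset.sum_ite_eq univ (v i) (fun x => c x y), if_pos (mem_univ _)]
    · simp
  rw [Finset.sum_congr rfl fun v _ => step3 v, ← Finset.sum_mul, sum_arr' φ hN hc0, one_mul,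
    Finset.sum_div]
  exact Finset.sum_congr rfl fun x _ => by ring
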